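/- The number of simple graphs on vertex set {1,...,n} with degree sequence d_1,...,d_n is at most M! / (2^{M/2} (M/2)! ∏_{j=1}^n d_j!), where M = ∑ d_j is even. -/

import Mathlib

open scoped Classical

namespace Stmt7Aux

set_option linter.unusedSectionVars false

/-! ### Fixed-point-free involutions and pairings -/

section Invol

variable {α : Type*} [Fintype α]

/-- The setoid pairing each element with its image under an involution. -/
def pairSetoid (f : Equiv.Perm α) (h1 : Function.Involutive f) : Setoid α where
  r x y := y = x ∨ y = f x
  iseqv := by
    refine ⟨fun x => Or.inl rfl, ?_, ?_⟩
    · rintro x y (rfl | rfl)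
      · exact Or.inl rfl
      · exact Or.inr (h1 x).symm
    · rintro x y z (rfl | rfl) (rfl | rfl)
      · exact Or.inl rfl
      · exact Or.inr rfl
      · exact Or.inr rfl
      · rw [h1 x]; exact Or.inl rfl

noncomputable instance (f : Equiv.Perm α) (h1 : Function.Involutive f) :
    Fintype (Quotient (pairSetoid f h1)) :=
  Quotient.fintype _

lemma pair_mk_out (f : Equiv.Perm α) (h1 : Function.Involutive f)
    (q : Quotient (pairSetoid f h1)) (b : Bool) :
    Quotient.mk (pairSetoid f h1) (cond b (f q.out) q.out) = q := by
  cases b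
  · exact Quotient.out_eq q
  · exact (Quotient.sound (Or.inr (h1 q.out).symm)).trans (Quotient.out_eq q)

/-- The equivalence `Q × Bool ≃ α` induced by a fixed-point-free involution. -/
noncomputable def pairEquiv (f : Equiv.Perm α) (h1 : Function.Involutive f)
    (h2 : ∀ x, f x ≠ x) : Quotient (pairSetoid f h1) × Bool ≃ α := by
  refine Equiv.ofBijective (fun p => cond p.2 (f p.1.out) p.1.out) ⟨?_, ?_⟩
  · rintro ⟨q, b⟩ ⟨q', b'⟩ hEq
    simp only at hEq
    have hq : q = q' := by
      rw [← pair_mk_out f h1 q b, ← pair_mk_out f h1 q' b', hEq]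
    subst hq
    cases b <;> cases b'
    · rfl
    · exact absurd hEq.symm (h2 q.out)
    · exact absurd hEq (h2 q.out)
    · rfl
  · intro x
    have hr : (pairSetoid f h1).r (Quotient.mk (pairSetoid f h1) x).out x :=
      Quotient.exact (Quotient.out_eq _)
    rcases hr with h | h
    · exact ⟨⟨Quotient.mk _ x, false⟩, h.symm⟩
    · exact ⟨⟨Quotient.mk _ x, true⟩, h.symm⟩

lemma pairEquiv_apply (f : Equiv.Perm α) (h1 : Function.Involutive f)
    (h2 : ∀ x, f x ≠ x) (p) :
    pairEquiv f h1 h2 p = cond p.2 (f p.1.out) p.1.out := rfl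

lemma card_quot (f : Equiv.Perm α) (h1 : Function.Involutive f) (h2 : ∀ x, f x ≠ x)
    {k : ℕ} (hcard : Fintype.card α = 2 * k) :
    Fintype.card (Quotient (pairSetoid f h1)) = k := by
  have := Fintype.card_congr (pairEquiv f h1 h2)
  simp only [Fintype.card_prod, Fintype.card_bool] at this
  omega

/-- The equivalence `Fin k × Bool ≃ α` adapted to a fixed-point-free involution. -/
noncomputable def beta (f : Equiv.Perm α) (h1 : Function.Involutive f)
    (h2 : ∀ x, f x ≠ x) {k : ℕ} (hcard : Fintype.card α = 2 * k) :
    Fin k × Bool ≃ α :=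
  (Equiv.prodCongr (Fintype.equivFinOfCardEq (card_quot f h1 h2 hcard)).symm
    (Equiv.refl Bool)).trans (pairEquiv f h1 h2)

lemma beta_flip (f : Equiv.Perm α) (h1 : Function.Involutive f)
    (h2 : ∀ x, f x ≠ x) {k : ℕ} (hcard : Fintype.card α = 2 * k) (q : Fin k) (b : Bool) :
    f (beta f h1 h2 hcard (q, b)) = beta f h1 h2 hcard (q, !b) := by
  cases b <;>
    simp [beta, pairEquiv_apply, Equiv.prodCongr_apply, h1 _]

end Invol

/-! ### Configurations attached to a graph with given degree sequence -/

variable {n : ℕ} {d : Fin n → ℕ}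

/-- Half-edges. -/
abbrev HE (d : Fin n → ℕ) := (j : Fin n) × Fin (d j)

/-- The `σ`-twisted enumeration of the neighbors of `j`. -/
noncomputable def phi (G : SimpleGraph (Fin n)) (hG : ∀ v, G.degree v = d v)
    (σ : ∀ j, Equiv.Perm (Fin (d j))) (j : Fin n) :
    Fin (d j) ≃ {x // x ∈ G.neighborFinset j} :=
  (σ j).trans ((G.neighborFinset j).orderIsoOfFin
    (by rw [SimpleGraph.card_neighborFinset_eq_degree, hG])).toEquiv

/-- Half-edges are in bijection with darts. -/
noncomputable def toDart (G : SimpleGraph (Fin n)) (hG : ∀ v, G.degree v = d v)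
    (σ : ∀ j, Equiv.Perm (Fin (d j))) : HE d ≃ G.Dart where
  toFun x := ⟨(x.1, (phi G hG σ x.1 x.2 : Fin n)), by
    have := (phi G hG σ x.1 x.2).2
    rwa [SimpleGraph.mem_neighborFinset] at this⟩
  invFun D := ⟨D.fst, (phi G hG σ D.fst).symm ⟨D.snd, by
    rw [SimpleGraph.mem_neighborFinset]; exact D.adj⟩⟩
  left_inv := by
    rintro ⟨j, i⟩
    refine congrArg (Sigma.mk j) ?_
    have : (⟨(phi G hG σ j i : Fin n), _⟩ : {x // x ∈ G.neighborFinset j}) = phi G hG σ j i :=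
      Subtype.ext rfl
    rw [this, Equiv.symm_apply_apply]
  right_inv := by
    rintro ⟨⟨a, b⟩, hab⟩
    apply SimpleGraph.Dart.ext
    refine Prod.ext rfl ?_
    show ((phi G hG σ a) ((phi G hG σ a).symm ⟨b, _⟩) : Fin n) = b
    rw [Equiv.apply_symm_apply]

/-- The configuration (perfect matching on half-edges) attached to `(G, σ)`. -/
noncomputable def conf (G : SimpleGraph (Fin n)) (hG : ∀ v, G.degree v = d v)
    (σ : ∀ j, Equiv.Perm (Fin (d j))) : Equiv.Perm (HE d) :=
  (toDart G hG σ).trans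
    ((Function.Involutive.toPerm _ SimpleGraph.Dart.symm_involutive).trans
      (toDart G hG σ).symm)

lemma conf_invol (G : SimpleGraph (Fin n)) (hG : ∀ v, G.degree v = d v)
    (σ : ∀ j, Equiv.Perm (Fin (d j))) : Function.Involutive (conf G hG σ) := by
  intro x
  simp [conf, Function.Involutive.coe_toPerm]

lemma conf_fpf (G : SimpleGraph (Fin n)) (hG : ∀ v, G.degree v = d v)
    (σ : ∀ j, Equiv.Perm (Fin (d j))) : ∀ x, conf G hG σ x ≠ x := by
  intro x h
  have := congrArg (toDart G hG σ) h
  simp [conf, Function.Involutive.coe_toPerm] at this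
  exact SimpleGraph.Dart.symm_ne _ this

lemma conf_fst (G : SimpleGraph (Fin n)) (hG : ∀ v, G.degree v = d v)
    (σ : ∀ j, Equiv.Perm (Fin (d j))) (j : Fin n) (i : Fin (d j)) :
    (conf G hG σ ⟨j, i⟩).1 = (phi G hG σ j i : Fin n) := rfl

lemma adj_iff_conf (G : SimpleGraph (Fin n)) (hG : ∀ v, G.degree v = d v)
    (σ : ∀ j, Equiv.Perm (Fin (d j))) (j k : Fin n) :
    G.Adj j k ↔ ∃ i, (conf G hG σ ⟨j, i⟩).1 = k := by
  constructor
  · intro h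
    have hk : k ∈ G.neighborFinset j := by rwa [SimpleGraph.mem_neighborFinset]
    refine ⟨(phi G hG σ j).symm ⟨k, hk⟩, ?_⟩
    rw [conf_fst, Equiv.apply_symm_apply]
  · rintro ⟨i, rfl⟩
    rw [conf_fst]
    have := (phi G hG σ j i).2
    rwa [SimpleGraph.mem_neighborFinset] at this

lemma sigma_eq_of_conf_eq (G : SimpleGraph (Fin n)) (hG : ∀ v, G.degree v = d v)
    (σ₁ σ₂ : ∀ j, Equiv.Perm (Fin (d j)))
    (h : conf G hG σ₁ = conf G hG σ₂) : σ₁ = σ₂ := by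
  funext j
  apply Equiv.ext
  intro i
  have h1 : (conf G hG σ₁ ⟨j, i⟩).1 = (conf G hG σ₂ ⟨j, i⟩).1 := by rw [h]
  rw [conf_fst, conf_fst] at h1
  have h2 : phi G hG σ₁ j i = phi G hG σ₂ j i := Subtype.ext h1
  simpa [phi] using h2

/-! ### The big injection -/

/-- The big injection into equivalences `Fin k × Bool ≃ HE d`. -/
noncomputable def bigMap (k : ℕ) (hcard : Fintype.card (HE d) = 2 * k) :
    ({G : SimpleGraph (Fin n) // ∀ v, G.degree v = d v} ×
      ((∀ j, Equiv.Perm (Fin (d j))) × (Equiv.Perm (Fin k) × (Fin k → Bool)))) →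
    (Fin k × Bool ≃ HE d) :=
  fun x =>
    (Equiv.prodShear x.2.2.1 (fun q => cond (x.2.2.2 q)
        (Function.Involutive.toPerm not Bool.not_not) (Equiv.refl Bool))).trans
      (beta (conf x.1.1 x.1.2 x.2.1) (conf_invol _ _ _) (conf_fpf _ _ _) hcard)

lemma bigMap_flip (k : ℕ) (hcard : Fintype.card (HE d) = 2 * k) (x) (q : Fin k) (b : Bool) :
    conf x.1.1 x.1.2 x.2.1 (bigMap k hcard x (q, b)) = bigMap k hcard x (q, !b) := by
  simp only [bigMap, Equiv.trans_apply, Equiv.prodShear_apply]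
  rw [beta_flip]
  refine congrArg _ (Prod.ext rfl ?_)
  cases hx : x.2.2.2 q <;> cases b <;>
    simp [hx, Function.Involutive.coe_toPerm, Function.Involutive.toPerm]

lemma conf_eq_bigMap (k : ℕ) (hcard : Fintype.card (HE d) = 2 * k) (x) (y : HE d) :
    conf x.1.1 x.1.2 x.2.1 y =
      bigMap k hcard x (((bigMap k hcard x).symm y).1, !((bigMap k hcard x).symm y).2) := by
  conv_lhs => rw [← Equiv.apply_symm_apply (bigMap k hcard x) y]
  generalize (bigMap k hcard x).symm y = p
  obtain ⟨q, b⟩ := p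
  exact bigMap_flip k hcard x q b

lemma bigMap_inj (k : ℕ) (hcard : Fintype.card (HE d) = 2 * k) :
    Function.Injective (bigMap (n := n) (d := d) k hcard) := by
  rintro ⟨⟨G₁, h₁⟩, σ₁, τ₁, ε₁⟩ ⟨⟨G₂, h₂⟩, σ₂, τ₂, ε₂⟩ hF
  have hconf : conf G₁ h₁ σ₁ = conf G₂ h₂ σ₂ := by
    apply Equiv.ext
    intro y
    have e1 := conf_eq_bigMap k hcard (⟨⟨G₁, h₁⟩, σ₁, τ₁, ε₁⟩ :
      {G : SimpleGraph (Fin n) // ∀ v, G.degree v = d v} ×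
      ((∀ j, Equiv.Perm (Fin (d j))) × (Equiv.Perm (Fin k) × (Fin k → Bool)))) y
    have e2 := conf_eq_bigMap k hcard (⟨⟨G₂, h₂⟩, σ₂, τ₂, ε₂⟩ :
      {G : SimpleGraph (Fin n) // ∀ v, G.degree v = d v} ×
      ((∀ j, Equiv.Perm (Fin (d j))) × (Equiv.Perm (Fin k) × (Fin k → Bool)))) y
    simp only at e1 e2
    rw [e1, e2, hF]
  have hG : G₁ = G₂ := by
    ext j k'
    rw [adj_iff_conf G₁ h₁ σ₁, adj_iff_conf G₂ h₂ σ₂, hconf]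
  subst hG
  have hh : h₁ = h₂ := rfl
  subst hh
  have hσ : σ₁ = σ₂ := sigma_eq_of_conf_eq G₁ h₁ σ₁ σ₂ hconf
  subst hσ
  have hβ := hF
  simp only [bigMap] at hβ
  have hsh : ∀ p : Fin k × Bool,
      (Equiv.prodShear τ₁ (fun q => cond (ε₁ q)
        (Function.Involutive.toPerm not Bool.not_not) (Equiv.refl Bool))) p =
      (Equiv.prodShear τ₂ (fun q => cond (ε₂ q)
        (Function.Involutive.toPerm not Bool.not_not) (Equiv.refl Bool))) p := by
    intro p
    apply (beta (conf G₁ h₁ σ₁) (conf_invol _ _ _) (conf_fpf _ _ _) hcard).injective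
    have := DFunLike.congr_fun hβ p
    simpa [Equiv.trans_apply] using this
  have hτ : τ₁ = τ₂ := by
    apply Equiv.ext
    intro q
    have := hsh (q, false)
    simp only [Equiv.prodShear_apply] at this
    exact congrArg Prod.fst this
  have hε : ε₁ = ε₂ := by
    funext q
    have := hsh (q, false)
    simp only [Equiv.prodShear_apply] at this
    have h2 := congrArg Prod.snd this
    revert h2
    cases hx1 : ε₁ q <;> cases hx2 : ε₂ q <;>
      simp [Function.Involutive.coe_toPerm, Function.Involutive.toPerm]
  subst hτ
  subst hε
  rfl

end Stmt7Aux

open Stmt7Aux in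
open scoped Classical in
/-- Configuration model bound: the number of simple graphs on `{1,…,n}` with
degree sequence `d` is at most `M! / (2^{M/2} (M/2)! ∏ dⱼ!)`. -/
theorem stmt_7 (n : ℕ) (d : Fin n → ℕ) (M : ℕ) (hM : M = ∑ j, d j)
    (hEven : Even M) :
    (Set.ncard {G : SimpleGraph (Fin n) | ∀ v, G.degree v = d v} : ℝ) ≤
      (Nat.factorial M : ℝ) /
        (2 ^ (M / 2) * Nat.factorial (M / 2) * ∏ j, Nat.factorial (d j)) := by
  have hdvd : 2 ∣ M := hEven.two_dvd
  have h2k : 2 * (M / 2) = M := Nat.mul_div_cancel' hdvd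
  set k := M / 2 with hk
  have hcard : Fintype.card (HE d) = 2 * k := by
    simp only [HE, Fintype.card_sigma, Fintype.card_fin]
    rw [← hM, ← h2k]
  have hinj := Fintype.card_le_of_injective _ (bigMap_inj (n := n) (d := d) k hcard)
  have hβ : Fintype.card (Fin k × Bool ≃ HE d) = Nat.factorial M := by
    rw [Fintype.card_equiv (Fintype.equivOfCardEq (by
      simp only [Fintype.card_prod, Fintype.card_fin, Fintype.card_bool, hcard]; ring))]
    congr 1
    simp only [Fintype.card_prod, Fintype.card_fin, Fintype.card_bool]
    omega
  rw [hβ, Fintype.card_prod, Fintype.card_prod] at hinj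
  have hpi : Fintype.card (∀ j, Equiv.Perm (Fin (d j))) = ∏ j, Nat.factorial (d j) := by
    simp [Fintype.card_pi, Fintype.card_perm]
  have hperm : Fintype.card (Equiv.Perm (Fin k)) = Nat.factorial k := by
    simp [Fintype.card_perm]
  have hfun : Fintype.card (Fin k → Bool) = 2 ^ k := by
    simp [Fintype.card_fun]
  rw [hpi, Fintype.card_prod, hperm, hfun] at hinj
  have hS : {G : SimpleGraph (Fin n) | ∀ v, G.degree v = d v}.ncard =
      Fintype.card {G : SimpleGraph (Fin n) // ∀ v, G.degree v = d v} := by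
    rw [← Nat.card_coe_set_eq, Nat.card_eq_fintype_card]
    exact Fintype.card_congr (Equiv.subtypeEquivRight fun G => Iff.rfl)
  rw [hS]
  set N := Fintype.card {G : SimpleGraph (Fin n) // ∀ v, G.degree v = d v} with hN
  have hpos : (0 : ℝ) < 2 ^ k * Nat.factorial k * ∏ j, (Nat.factorial (d j) : ℝ) := by
    apply mul_pos
    apply mul_pos
    · positivity
    · exact_mod_cast Nat.factorial_pos k
    · apply Finset.prod_pos
      intro i _
      exact_mod_cast Nat.factorial_pos (d i)
  rw [Nat.cast_prod, le_div_iff₀ hpos]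
  calc (N : ℝ) * (2 ^ k * Nat.factorial k * ∏ j, (Nat.factorial (d j) : ℝ))
      = ((N * ((∏ j, Nat.factorial (d j)) * (Nat.factorial k * 2 ^ k)) : ℕ) : ℝ) := by
        push_cast; ring
    _ ≤ (Nat.factorial M : ℝ) := by exact_mod_cast hinj
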